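/- Suppose q ≡ 1 (mod 8) and p ≡ 5 (mod 8). Define G(X) = 2·∑_{j=0}^{q-1} X^{jp} + ∑_{i=0}^{3} (ρ - i)·D_i(X) over GR(4, 4^ℓ). Then for every u ≥ 0, G(β^u) equals the image of e_u under the canonical ring map Z_4 → GR(4, 4^ℓ); i.e., G is a defining polynomial of the sequence (e_u). -/

import Mathlib

set_option linter.unusedSectionVars false
set_option maxHeartbeats 1000000

open WittVector

section TWLemmas

variable {K : Type*} [Field K] [CharP K 2]

lemma tw_out_eq (x : TruncatedWittVector 2 2 K) : WittVector.truncate 2 x.out = x :=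
  TruncatedWittVector.truncateFun_out x

lemma tw_sq_zero (x : TruncatedWittVector 2 2 K) (h : x.coeff (0 : Fin 2) = 0) : x * x = 0 := by
  have h0 : x.out.coeff 0 = 0 := by
    have := TruncatedWittVector.coeff_out x (0 : Fin 2)
    exact this.trans h
  have hx : x = WittVector.truncate 2 x.out := (tw_out_eq x).symm
  rw [hx, ← map_mul]
  have ha : x.out = verschiebung^[1] (x.out.shift 1) :=
    WittVector.eq_iterate_verschiebung (by intro i hi; interval_cases i; exact h0)
  have hmul : x.out * x.out = verschiebung^[2]
      (frobenius^[1] (x.out.shift 1) * frobenius^[1] (x.out.shift 1)) := by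
    conv_lhs => rw [ha]
    rw [WittVector.iterate_verschiebung_mul]
  rw [hmul]
  refine (WittVector.mem_ker_truncate (p := 2) (R := K) 2 _).2 ?_
  intro i hi
  interval_cases i
  · simp [Function.iterate_succ_apply', WittVector.verschiebung_coeff_zero]
  · simp [Function.iterate_succ_apply', WittVector.verschiebung_coeff_succ,
      WittVector.verschiebung_coeff_zero]

lemma tw_isUnit (x : TruncatedWittVector 2 2 K) (h : x.coeff (0 : Fin 2) ≠ 0) : IsUnit x := by
  have h0 : x.out.coeff 0 ≠ 0 := by
    have := TruncatedWittVector.coeff_out x (0 : Fin 2)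
    exact fun h' => h (this.symm.trans h')
  have hu := WittVector.isUnit_of_coeff_zero_ne_zero x.out h0
  have hx : x = WittVector.truncate 2 x.out := (tw_out_eq x).symm
  rw [hx]
  exact hu.map _

lemma tw_unit_or_sq (x : TruncatedWittVector 2 2 K) : IsUnit x ∨ x * x = 0 := by
  by_cases h : x.coeff (0 : Fin 2) = 0
  · exact Or.inr (tw_sq_zero x h)
  · exact Or.inl (tw_isUnit x h)

lemma tw_two_sq : ((2:TruncatedWittVector 2 2 K)) * 2 = 0 := by
  refine tw_sq_zero _ ?_
  have h2 : (2 : TruncatedWittVector 2 2 K) = WittVector.truncate 2 (2 : WittVector 2 K) :=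
    (map_ofNat (WittVector.truncate 2) 2).symm
  rw [h2, WittVector.coeff_truncate]
  have : ((2 : WittVector 2 K)).coeff ((0 : Fin 2) : ℕ) = WittVector.constantCoeff (2 : WittVector 2 K) := rfl
  rw [this, map_ofNat]
  exact CharP.cast_eq_zero K 2

lemma tw_four : ((4:TruncatedWittVector 2 2 K)) = 0 := by
  have := tw_two_sq (K := K)
  linear_combination this

lemma tw_root_sub_one_unit (ζ : TruncatedWittVector 2 2 K) (n : ℕ) (hn : Odd n)
    (h1 : ζ ^ n = 1) (hne : ζ ≠ 1) : IsUnit (ζ - 1) := by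
  rcases tw_unit_or_sq (ζ - 1) with hu | hs
  · exact hu
  · exfalso
    have h8 : ζ ^ 8 = 1 := by
      have h4 := tw_four (K := K)
      linear_combination (ζ^6 + 2*ζ^5 + 3*ζ^4 + 4*ζ^3 + 5*ζ^2 + 6*ζ + 7) * hs + (2*ζ - 2) * h4
    have hd8 : orderOf ζ ∣ 8 := orderOf_dvd_of_pow_eq_one h8
    have hdn : orderOf ζ ∣ n := orderOf_dvd_of_pow_eq_one h1
    have hcop : Nat.Coprime 8 n := by
      have h2 : Nat.Coprime 2 n := by
        exact hn.coprime_two_left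
      simpa using Nat.Coprime.pow_left 3 h2
    have : orderOf ζ ∣ 1 := by
      have := Nat.dvd_gcd hd8 hdn
      rwa [hcop] at this
    exact hne (orderOf_eq_one_iff.1 (Nat.dvd_one.1 this))

lemma tw_geom_zero (ζ : TruncatedWittVector 2 2 K) (n : ℕ) (hn : Odd n)
    (h1 : ζ ^ n = 1) (hne : ζ ≠ 1) : ∑ j ∈ Finset.range n, ζ ^ j = 0 := by
  have hu := tw_root_sub_one_unit ζ n hn h1 hne
  have hg := geom_sum_mul ζ n
  rw [h1, sub_self] at hg
  rcases hu with ⟨v, hv⟩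
  calc ∑ j ∈ Finset.range n, ζ ^ j
      = ((∑ j ∈ Finset.range n, ζ ^ j) * (ζ - 1)) * ↑v⁻¹ := by
        rw [mul_assoc, ← hv, Units.mul_inv, mul_one]
    _ = 0 := by rw [hg, zero_mul]

end TWLemmas

lemma pow_val_natCast' {M : Type*} [Monoid M] (β : M) (N : ℕ) [NeZero N]
    (ho : orderOf β = N) (m : ℕ) : β ^ ((m : ZMod N)).val = β ^ m := by
  conv_rhs => rw [← Nat.mod_add_div m N]
  rw [ZMod.val_natCast, pow_add, pow_mul, ← ho, pow_orderOf_eq_one, one_pow, mul_one]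

lemma sum_range_shift' {M : Type*} [AddCommGroup M] (f : ℕ → M) (T : ℕ)
    (hf : ∀ m, f (m + T) = f m) (i : ℕ) :
    ∑ m ∈ Finset.range T, f (m + i) = ∑ m ∈ Finset.range T, f m := by
  induction i with
  | zero => simp
  | succ i ih =>
    have key : ∀ g : ℕ → M, g T = g 0 → ∑ m ∈ Finset.range T, g (m + 1) = ∑ m ∈ Finset.range T, g m := by
      intro g hg
      have h1 := Finset.sum_range_succ' g T
      have h2 := Finset.sum_range_succ g T
      rw [h1, hg] at h2
      exact add_right_cancel h2
    have hkey := key (fun n => f (n + i)) (by rw [show T + i = i + T by omega, hf, zero_add])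
    calc ∑ m ∈ Finset.range T, f (m + (i+1)) = ∑ m ∈ Finset.range T, f ((m + 1) + i) := by
          apply Finset.sum_congr rfl; intro m _; congr 1; omega
      _ = ∑ m ∈ Finset.range T, f (m + i) := hkey
      _ = ∑ m ∈ Finset.range T, f m := ih

lemma sum_range_mul_periodic' {M : Type*} [AddCommGroup M] (f : ℕ → M) (T n : ℕ)
    (hf : ∀ m, f (m + T) = f m) :
    ∑ m ∈ Finset.range (n * T), f m = n • ∑ m ∈ Finset.range T, f m := by
  induction n with
  | zero => simp
  | succ n ih =>
    have hnT : (n+1) * T = n * T + T := by ring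
    rw [hnT, Finset.sum_range_add, ih]
    have : ∑ m ∈ Finset.range T, f (n * T + m) = ∑ m ∈ Finset.range T, f m := by
      have := sum_range_shift' f T hf (n * T)
      calc ∑ m ∈ Finset.range T, f (n * T + m) = ∑ m ∈ Finset.range T, f (m + n * T) := by
            apply Finset.sum_congr rfl; intro m _; congr 1; omega
        _ = _ := this
    rw [this, succ_nsmul]

lemma sum_prod_four' {M : Type*} [AddCommMonoid M] (f : ℕ → M) (Q : ℕ) :
    ∑ sj ∈ Finset.range Q ×ˢ Finset.range 4, f (4 * sj.1 + sj.2) = ∑ m ∈ Finset.range (4 * Q), f m := by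
  apply Finset.sum_nbij' (i := fun sj => 4 * sj.1 + sj.2) (j := fun m => (m / 4, m % 4))
  · intro a ha
    simp only [Finset.mem_product, Finset.mem_range] at ha ⊢
    omega
  · intro m hm
    simp only [Finset.mem_product, Finset.mem_range] at hm ⊢
    omega
  · intro a ha
    simp only [Finset.mem_product, Finset.mem_range] at ha
    ext <;> simp <;> omega
  · intro m hm; simp; omega
  · intro a ha; rfl

lemma isUnit_pow_eq_pow_iff_modEq {M : Type*} [Monoid M] {x : M} (hx : IsUnit x) (m n : ℕ) :
    x ^ m = x ^ n ↔ m ≡ n [MOD orderOf x] := by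
  rcases hx with ⟨u, rfl⟩
  rw [← Units.val_pow_eq_pow_val, ← Units.val_pow_eq_pow_val, Units.val_inj,
    pow_eq_pow_iff_modEq, orderOf_units]

theorem stmt11
    (p q : ℕ) (hp : Nat.Prime p) (hq : Nat.Prime q) (hne : p ≠ q)
    (hpo : Odd p) (hqo : Odd q)
    (hgcd : Nat.gcd (p - 1) (q - 1) = 4)
    (e : ℕ) (he : e = (p - 1) * (q - 1) / 4)
    (g h : ℕ)
    (hgp : orderOf (g : ZMod p) = p - 1)
    (hgq : orderOf (g : ZMod q) = q - 1)
    (hhp : (h : ZMod p) = (g : ZMod p))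
    (hhq : (h : ZMod q) = 1)
    (D : ℕ → Finset (ZMod (p * q)))
    (hD : ∀ i, D i = (Finset.range (e / 4) ×ˢ Finset.range 4).image
        (fun sj => (g : ZMod (p * q)) ^ (4 * sj.1 + i) * (h : ZMod (p * q)) ^ sj.2))
    (Pset Qset : Finset (ZMod (p * q)))
    (hP : Pset = (Finset.Icc 1 (q - 1)).image (fun k => ((k * p : ℕ) : ZMod (p * q))))
    (hQ : Qset = (Finset.Icc 1 (p - 1)).image (fun k => ((k * q : ℕ) : ZMod (p * q))))
    (E : ℕ → ZMod 4)
    (hE2 : ∀ u : ℕ, ((u : ZMod (p * q)) ∈ Qset ∨ (u : ZMod (p * q)) = 0) → E u = 2)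
    (hE0 : ∀ u : ℕ, (u : ZMod (p * q)) ∈ Pset → E u = 0)
    (hED : ∀ u : ℕ, ∀ i < 4, (u : ZMod (p * q)) ∈ D i → E u = (i : ZMod 4))
    (ℓ : ℕ) (β : TruncatedWittVector 2 2 (GaloisField 2 ℓ))
    (hβu : IsUnit β) (hβo : orderOf β = p * q)
    (ρ : TruncatedWittVector 2 2 (GaloisField 2 ℓ))
    (hρ : ρ = ∑ i ∈ Finset.Icc (1 : ℕ) 3, ((i : ℕ) : TruncatedWittVector 2 2 (GaloisField 2 ℓ)) * ∑ u ∈ D i, β ^ u.val)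
    (hq8 : q % 8 = 1) (hp8 : p % 8 = 5) :
    ∀ u : ℕ,
      2 * (∑ j ∈ Finset.range q, (β ^ u) ^ (j * p))
        + ∑ i ∈ Finset.range 4,
            (ρ - (i : TruncatedWittVector 2 2 (GaloisField 2 ℓ)))
              * (∑ v ∈ D i, (β ^ u) ^ v.val)
      = (((E u).val : ℕ) : TruncatedWittVector 2 2 (GaloisField 2 ℓ)) := by
  have hp2 := hp.two_le
  have hq2 := hq.two_le
  obtain ⟨a, hpa⟩ : ∃ a, p = 8*a+5 := ⟨p/8, by omega⟩
  obtain ⟨c, hqc⟩ : ∃ c, q = 8*c+1 := ⟨q/8, by omega⟩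
  have hc1 : 1 ≤ c := by omega
  have hp1 : p - 1 = 4*(2*a+1) := by omega
  have hq1 : q - 1 = 8*c := by omega
  have he4 : e = 4*((2*a+1)*(2*c)) := by
    rw [he, hp1, hq1]
    have h1 : 4*(2*a+1) * (8*c) = ((2*a+1) * (8*c)) * 4 := by ring
    rw [h1, Nat.mul_div_cancel _ (by norm_num)]
    ring
  have he4' : e/4 = (2*a+1)*(2*c) := by omega
  haveI hNz : NeZero (p*q) := ⟨by positivity⟩
  have hpq : Nat.Coprime p q := (Nat.coprime_primes hp hq).mpr hne
  have hNodd : Odd (p*q) := hpo.mul hqo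
  have hfour : ((4:ℕ) : TruncatedWittVector 2 2 (GaloisField 2 ℓ)) = 0 := by
    push_cast
    exact tw_four
  -- CRT helpers
  have hcrt : ∀ m n : ℕ, (m : ZMod p) = (n : ZMod p) → (m : ZMod q) = (n : ZMod q) →
      (m : ZMod (p*q)) = (n : ZMod (p*q)) := by
    intro m n h1 h2
    rw [ZMod.natCast_eq_natCast_iff] at h1 h2 ⊢
    exact (Nat.modEq_and_modEq_iff_modEq_mul hpq).1 ⟨h1, h2⟩
  have hdp : ∀ m n : ℕ, (m : ZMod (p*q)) = (n : ZMod (p*q)) → (m : ZMod p) = (n : ZMod p) := by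
    intro m n h1
    rw [ZMod.natCast_eq_natCast_iff] at h1 ⊢
    exact h1.of_dvd (dvd_mul_right p q)
  have hdq : ∀ m n : ℕ, (m : ZMod (p*q)) = (n : ZMod (p*q)) → (m : ZMod q) = (n : ZMod q) := by
    intro m n h1
    rw [ZMod.natCast_eq_natCast_iff] at h1 ⊢
    exact h1.of_dvd (dvd_mul_left q p)
  -- beta facts
  have hβN : β^(p*q) = 1 := by rw [← hβo]; exact pow_orderOf_eq_one β
  have hβ1 : β ≠ 1 := by
    intro hcon
    rw [hcon, orderOf_one] at hβo
    have : 2 ≤ p*q := by nlinarith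
    omega
  have hBnat : ∀ m : ℕ, β ^ ((m : ZMod (p*q))).val = β ^ m := pow_val_natCast' β (p*q) hβo
  -- power congruence tools
  have hgu_p : IsUnit (g : ZMod p) := by
    apply IsUnit.of_pow_eq_one (n := p-1)
    · rw [← hgp]; exact pow_orderOf_eq_one _
    · omega
  have hgu_q : IsUnit (g : ZMod q) := by
    apply IsUnit.of_pow_eq_one (n := q-1)
    · rw [← hgq]; exact pow_orderOf_eq_one _
    · omega
  have hgp_iff : ∀ m n : ℕ, (((g^m : ℕ) : ZMod p) = ((g^n : ℕ) : ZMod p)) ↔ m ≡ n [MOD p-1] := by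
    intro m n
    push_cast
    rw [isUnit_pow_eq_pow_iff_modEq hgu_p, hgp]
  have hgq_iff : ∀ m n : ℕ, (((g^m : ℕ) : ZMod q) = ((g^n : ℕ) : ZMod q)) ↔ m ≡ n [MOD q-1] := by
    intro m n
    push_cast
    rw [isUnit_pow_eq_pow_iff_modEq hgu_q, hgq]
  have hhp_pow : ∀ x y : ℕ, ((g^x * h^y : ℕ) : ZMod p) = ((g^(x+y) : ℕ) : ZMod p) := by
    intro x y
    push_cast
    rw [hhp, ← pow_add]
  have hhq_pow : ∀ x y : ℕ, ((g^x * h^y : ℕ) : ZMod q) = ((g^x : ℕ) : ZMod q) := by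
    intro x y
    push_cast
    rw [hhq, one_pow, mul_one]
  -- units
  have hcop_g : Nat.Coprime g (p*q) := by
    refine Nat.Coprime.mul_right ?_ ?_
    · exact (ZMod.isUnit_iff_coprime g p).1 hgu_p
    · exact (ZMod.isUnit_iff_coprime g q).1 hgu_q
  have hcop_h : Nat.Coprime h (p*q) := by
    refine Nat.Coprime.mul_right ?_ ?_
    · exact (ZMod.isUnit_iff_coprime h p).1 (by rw [show ((h:ℕ) : ZMod p) = (g : ZMod p) from hhp]; exact hgu_p)
    · exact (ZMod.isUnit_iff_coprime h q).1 (by rw [show ((h:ℕ) : ZMod q) = 1 from hhq]; exact isUnit_one)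
  have hunit_prod : ∀ x y : ℕ, IsUnit ((g^x * h^y : ℕ) : ZMod (p*q)) := by
    intro x y
    have : IsUnit ((g : ℕ) : ZMod (p*q)) := (ZMod.isUnit_iff_coprime g (p*q)).2 hcop_g
    have h2 : IsUnit ((h : ℕ) : ZMod (p*q)) := (ZMod.isUnit_iff_coprime h (p*q)).2 hcop_h
    push_cast
    exact (this.pow x).mul (h2.pow y)
  -- coprimality of (2a+1) and (2c)
  have hco : Nat.Coprime (2*a+1) (2*c) := by
    have hd4 : Nat.gcd (2*a+1) (2*c) ∣ 4 := by
      rw [← hgcd, hp1, hq1]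
      exact Nat.dvd_gcd (Dvd.dvd.mul_left (Nat.gcd_dvd_left _ _) 4)
        ((Nat.gcd_dvd_right (2*a+1) (2*c)).trans ⟨4, by ring⟩)
    have hdo : Nat.gcd (2*a+1) (2*c) ∣ 2*a+1 := Nat.gcd_dvd_left _ _
    have hle : Nat.gcd (2*a+1) (2*c) ≤ 4 := Nat.le_of_dvd (by norm_num) hd4
    interval_cases hgg : Nat.gcd (2*a+1) (2*c)
    · exfalso; have := Nat.eq_zero_of_gcd_eq_zero_left hgg; omega
    · exact hgg
    · exfalso; omega
    · exfalso; revert hd4; decide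
    · exfalso; omega
  -- rewrite D in ℕ-cast form
  have hD' : ∀ i, D i = (Finset.range (e/4) ×ˢ Finset.range 4).image
      (fun sj : ℕ × ℕ => ((g^(4*sj.1+i) * h^sj.2 : ℕ) : ZMod (p*q))) := by
    intro i
    rw [hD i]
    apply Finset.image_congr
    intro sj _
    push_cast
    ring
  -- injectivity of the parametrization of D i
  have hinj : ∀ i : ℕ, ∀ sj ∈ Finset.range (e/4) ×ˢ Finset.range 4,
      ∀ sj' ∈ Finset.range (e/4) ×ˢ Finset.range 4,
      ((g^(4*sj.1+i) * h^sj.2 : ℕ) : ZMod (p*q)) = ((g^(4*sj'.1+i) * h^sj'.2 : ℕ) : ZMod (p*q)) →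
      sj = sj' := by
    rintro i ⟨s, j⟩ hsj ⟨s', j'⟩ hsj' heq
    simp only [Finset.mem_product, Finset.mem_range] at hsj hsj'
    have hmp : (4*s+i) + j ≡ (4*s'+i) + j' [MOD p-1] := by
      have h1 := hdp _ _ heq
      rw [hhp_pow, hhp_pow] at h1
      exact (hgp_iff _ _).1 h1
    have hmq : 4*s+i ≡ 4*s'+i [MOD q-1] := by
      have h1 := hdq _ _ heq
      rw [hhq_pow, hhq_pow] at h1
      exact (hgq_iff _ _).1 h1
    rw [hq1] at hmq
    rw [hp1] at hmp
    have hsq : s ≡ s' [MOD 2*c] := by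
      have h1 : 4*s ≡ 4*s' [MOD 8*c] := hmq.add_right_cancel' i
      have h2 : 4*s ≡ 4*s' [MOD 4*(2*c)] := by
        have h3 : 8*c = 4*(2*c) := by ring
        rw [h3] at h1
        exact h1
      exact Nat.ModEq.mul_left_cancel' (by norm_num) h2
    have hj : j = j' := by
      have h4 : (4*s+i) + j ≡ (4*s'+i) + j' [MOD 4] := hmp.of_dvd ⟨2*a+1, rfl⟩
      have h5 : ((4*s+i) + j) % 4 = ((4*s'+i) + j') % 4 := h4
      omega
    subst hj
    have hsp : s ≡ s' [MOD 2*a+1] := by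
      have h1 : 4*s+i ≡ 4*s'+i [MOD 4*(2*a+1)] := hmp.add_right_cancel' j
      have h2 : 4*s ≡ 4*s' [MOD 4*(2*a+1)] := h1.add_right_cancel' i
      exact Nat.ModEq.mul_left_cancel' (by norm_num) h2
    have hsall : s ≡ s' [MOD (2*a+1)*(2*c)] :=
      (Nat.modEq_and_modEq_iff_modEq_mul hco).1 ⟨hsp, hsq⟩
    have hs : s = s' := by
      apply hsall.eq_of_lt_of_lt <;> omega
    simp [hs]
  -- membership lemma
  have hmem : ∀ (A b i : ℕ), i < 4 → ((g^(4*A+i) * h^b : ℕ) : ZMod (p*q)) ∈ D i := by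
    intro A b i hi
    obtain ⟨s₀, hs₀p, hs₀q⟩ := Nat.chineseRemainder hco (A + b/4) A
    set s := s₀ % (e/4) with hs_def
    have hE4pos : 0 < e/4 := by rw [he4']; exact Nat.mul_pos (by omega) (by omega)
    have hslt : s < e/4 := Nat.mod_lt _ hE4pos
    have hsp : s ≡ A + b/4 [MOD 2*a+1] := by
      have h2 : s ≡ s₀ [MOD 2*a+1] := (Nat.mod_modEq s₀ (e/4)).of_dvd (by rw [he4']; exact ⟨2*c, rfl⟩)
      exact h2.trans hs₀p
    have hsq : s ≡ A [MOD 2*c] := by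
      have h2 : s ≡ s₀ [MOD 2*c] := (Nat.mod_modEq s₀ (e/4)).of_dvd (by rw [he4']; exact ⟨2*a+1, mul_comm _ _⟩)
      exact h2.trans hs₀q
    rw [hD' i]
    rw [Finset.mem_image]
    refine ⟨(s, b % 4), ?_, ?_⟩
    · simp only [Finset.mem_product, Finset.mem_range]
      exact ⟨hslt, by omega⟩
    · apply hcrt
      · rw [hhp_pow, hhp_pow]
        apply (hgp_iff _ _).2
        rw [hp1]
        have h1 : 4*s ≡ 4*(A + b/4) [MOD 4*(2*a+1)] := hsp.mul_left' 4
        have h2 : 4*s + (i + b % 4) ≡ 4*(A + b/4) + (i + b % 4) [MOD 4*(2*a+1)] := h1.add_right _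
        have e1 : (4*s+i) + b % 4 = 4*s + (i + b % 4) := by omega
        have e2 : (4*A+i) + b = 4*(A + b/4) + (i + b % 4) := by omega
        rw [e1, e2]
        exact h2
      · rw [hhq_pow, hhq_pow]
        apply (hgq_iff _ _).2
        rw [hq1]
        have h1 : 4*s ≡ 4*A [MOD 4*(2*c)] := hsq.mul_left' 4
        have h2 : 4*s + i ≡ 4*A + i [MOD 4*(2*c)] := h1.add_right _
        have e3 : 8*c = 4*(2*c) := by ring
        rw [e3]
        exact h2
  -- cardinality of D i
  have hDcard : ∀ i : ℕ, (D i).card = e := by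
    intro i
    rw [hD' i, Finset.card_image_of_injOn (fun x hx y hy hxy => hinj i x hx y hy hxy),
      Finset.card_product, Finset.card_range, Finset.card_range]
    omega
  -- multiples of p and q
  set Mp : Finset (ZMod (p*q)) := (Finset.range q).image (fun j => ((j*p : ℕ) : ZMod (p*q))) with hMp_def
  set Mq : Finset (ZMod (p*q)) := (Finset.range p).image (fun j => ((j*q : ℕ) : ZMod (p*q))) with hMq_def
  have hMpinj : ∀ j1 ∈ Finset.range q, ∀ j2 ∈ Finset.range q,
      ((j1*p : ℕ) : ZMod (p*q)) = ((j2*p : ℕ) : ZMod (p*q)) → j1 = j2 := by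
    intro j1 h1 j2 h2 heq
    rw [Finset.mem_range] at h1 h2
    rw [ZMod.natCast_eq_natCast_iff] at heq
    have h3 : p*j1 ≡ p*j2 [MOD p*q] := by
      rwa [mul_comm j1 p, mul_comm j2 p] at heq
    have h4 : j1 ≡ j2 [MOD q] := Nat.ModEq.mul_left_cancel' (by omega) h3
    exact h4.eq_of_lt_of_lt h1 h2
  have hMqinj : ∀ j1 ∈ Finset.range p, ∀ j2 ∈ Finset.range p,
      ((j1*q : ℕ) : ZMod (p*q)) = ((j2*q : ℕ) : ZMod (p*q)) → j1 = j2 := by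
    intro j1 h1 j2 h2 heq
    rw [Finset.mem_range] at h1 h2
    rw [ZMod.natCast_eq_natCast_iff] at heq
    have h3 : q*j1 ≡ q*j2 [MOD q*p] := by
      rw [mul_comm q p]
      rwa [mul_comm j1 q, mul_comm j2 q] at heq
    have h4 : j1 ≡ j2 [MOD p] := Nat.ModEq.mul_left_cancel' (by omega) h3
    exact h4.eq_of_lt_of_lt h1 h2
  have hMpcard : Mp.card = q := by
    rw [hMp_def, Finset.card_image_of_injOn (fun x hx y hy hxy => hMpinj x hx y hy hxy),
      Finset.card_range]
  have hMqcard : Mq.card = p := by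
    rw [hMq_def, Finset.card_image_of_injOn (fun x hx y hy hxy => hMqinj x hx y hy hxy),
      Finset.card_range]
  have hMp0 : (0 : ZMod (p*q)) ∈ Mp := by
    rw [hMp_def, Finset.mem_image]
    exact ⟨0, Finset.mem_range.2 (by omega), by norm_num⟩
  have hMq0 : (0 : ZMod (p*q)) ∈ Mq := by
    rw [hMq_def, Finset.mem_image]
    exact ⟨0, Finset.mem_range.2 (by omega), by norm_num⟩
  have hMpMq : Mp ∩ Mq = {0} := by
    apply Finset.ext
    intro x
    simp only [Finset.mem_inter, Finset.mem_singleton]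
    constructor
    · rintro ⟨hx1, hx2⟩
      rw [hMp_def, Finset.mem_image] at hx1
      rw [hMq_def, Finset.mem_image] at hx2
      obtain ⟨j, _, hj⟩ := hx1
      obtain ⟨k, _, hk⟩ := hx2
      rw [← hj]
      have : ((j*p : ℕ) : ZMod (p*q)) = ((0 : ℕ) : ZMod (p*q)) := by
        apply hcrt
        · push_cast [ZMod.natCast_self]
          ring
        · have h1 : ((j*p : ℕ) : ZMod q) = ((k*q : ℕ) : ZMod q) := hdq _ _ (by rw [hj, hk])
          rw [h1]
          push_cast [ZMod.natCast_self]
          ring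
      simpa using this
    · rintro rfl
      exact ⟨hMp0, hMq0⟩
  -- non-units
  have hMp_nonunit : ∀ x ∈ Mp, ¬ IsUnit x := by
    intro x hx hu
    rw [hMp_def, Finset.mem_image] at hx
    obtain ⟨j, _, hj⟩ := hx
    rw [← hj] at hu
    have hcop := (ZMod.isUnit_iff_coprime (j*p) (p*q)).1 hu
    have : p ∣ Nat.gcd (j*p) (p*q) := Nat.dvd_gcd (dvd_mul_left p j) (dvd_mul_right p q)
    rw [hcop, Nat.dvd_one] at this
    omega
  have hMq_nonunit : ∀ x ∈ Mq, ¬ IsUnit x := by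
    intro x hx hu
    rw [hMq_def, Finset.mem_image] at hx
    obtain ⟨j, _, hj⟩ := hx
    rw [← hj] at hu
    have hcop := (ZMod.isUnit_iff_coprime (j*q) (p*q)).1 hu
    have : q ∣ Nat.gcd (j*q) (p*q) := Nat.dvd_gcd (dvd_mul_left q j) (dvd_mul_left q p)
    rw [hcop, Nat.dvd_one] at this
    omega
  have hDunit : ∀ i : ℕ, ∀ x ∈ D i, IsUnit x := by
    intro i x hx
    rw [hD' i, Finset.mem_image] at hx
    obtain ⟨sj, _, hsj⟩ := hx
    rw [← hsj]
    exact hunit_prod _ _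
  -- disjointness of the D i
  have hDdisj : ∀ i1 i2 : ℕ, i1 < 4 → i2 < 4 → i1 ≠ i2 → Disjoint (D i1) (D i2) := by
    intro i1 i2 hi1 hi2 hne12
    rw [Finset.disjoint_left]
    intro x hx1 hx2
    rw [hD' i1, Finset.mem_image] at hx1
    rw [hD' i2, Finset.mem_image] at hx2
    obtain ⟨⟨s, j⟩, _, hsj⟩ := hx1
    obtain ⟨⟨s', j'⟩, _, hsj'⟩ := hx2
    have heq : ((g^(4*s+i1) * h^j : ℕ) : ZMod (p*q)) = ((g^(4*s'+i2) * h^j' : ℕ) : ZMod (p*q)) := by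
      rw [hsj, hsj']
    have h1 := hdq _ _ heq
    rw [hhq_pow, hhq_pow] at h1
    have h2 := (hgq_iff _ _).1 h1
    rw [hq1] at h2
    have h3 : 4*s+i1 ≡ 4*s'+i2 [MOD 4] := h2.of_dvd ⟨2*c, by ring⟩
    have h4 : (4*s+i1) % 4 = (4*s'+i2) % 4 := h3
    omega
  -- the union of the D i
  set Ufin : Finset (ZMod (p*q)) := (Finset.range 4).biUnion D with hUfin_def
  have hUcard : Ufin.card = 4*e := by
    rw [hUfin_def, Finset.card_biUnion (fun i hi j hj hij =>
      hDdisj i j (Finset.mem_range.1 hi) (Finset.mem_range.1 hj) hij)]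
    rw [Finset.sum_congr rfl (fun i _ => hDcard i), Finset.sum_const, Finset.card_range,
      smul_eq_mul]
  have hkey_card : 4*e + (p + q - 1) = p*q := by
    obtain ⟨t, ht⟩ : ∃ t, a*c = t := ⟨_, rfl⟩
    have h1 : 4*e = 64*t + 32*c := by rw [he4, ← ht]; ring
    have h2 : p*q = 64*t+8*a+40*c+5 := by rw [hpa, hqc, ← ht]; ring
    omega
  have hUnion_card : (Mp ∪ Mq).card = p + q - 1 := by
    have h1 := Finset.card_union_add_card_inter Mp Mq
    rw [hMpMq, hMpcard, hMqcard, Finset.card_singleton] at h1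
    omega
  have hsub : Ufin = Finset.univ \ (Mp ∪ Mq) := by
    apply Finset.eq_of_subset_of_card_le
    · intro x hx
      rw [hUfin_def, Finset.mem_biUnion] at hx
      obtain ⟨i, hi, hxD⟩ := hx
      rw [Finset.mem_sdiff]
      refine ⟨Finset.mem_univ x, ?_⟩
      intro hmem'
      rcases Finset.mem_union.1 hmem' with hc | hc
      · exact hMp_nonunit x hc (hDunit i x hxD)
      · exact hMq_nonunit x hc (hDunit i x hxD)
    · rw [Finset.card_sdiff_of_subset (Finset.subset_univ _), hUnion_card, Finset.card_univ,
        ZMod.card, hUcard]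
      omega
  -- the three geometric-sum facts
  have hTuniv : ∑ v : ZMod (p*q), β^v.val = 0 := by
    have hre : ∑ v : ZMod (p*q), β^v.val = ∑ m ∈ Finset.range (p*q), β^m := by
      apply Finset.sum_nbij' (i := fun v => v.val) (j := fun m => ((m : ℕ) : ZMod (p*q)))
      · intro v _
        exact Finset.mem_range.2 (ZMod.val_lt v)
      · intro m _
        exact Finset.mem_univ _
      · intro v _
        simp [ZMod.natCast_val, ZMod.cast_id]
      · intro m hm
        exact ZMod.val_natCast_of_lt (Finset.mem_range.1 hm)
      · intro v _
        rfl
    rw [hre]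
    exact tw_geom_zero β (p*q) hNodd hβN hβ1
  have hβp_ne : β^p ≠ 1 := by
    intro hcon
    have := orderOf_dvd_of_pow_eq_one hcon
    rw [hβo] at this
    have := Nat.le_of_dvd (by omega) this
    nlinarith
  have hβq_ne : β^q ≠ 1 := by
    intro hcon
    have := orderOf_dvd_of_pow_eq_one hcon
    rw [hβo] at this
    have := Nat.le_of_dvd (by omega) this
    nlinarith
  have hTMp : ∑ v ∈ Mp, β^v.val = 0 := by
    rw [hMp_def, Finset.sum_image hMpinj]
    have h1 : ∀ j ∈ Finset.range q, β^(((j*p : ℕ) : ZMod (p*q))).val = (β^p)^j := by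
      intro j _
      rw [hBnat, mul_comm, pow_mul]
    rw [Finset.sum_congr rfl h1]
    exact tw_geom_zero (β^p) q hqo (by rw [← pow_mul]; exact hβN) hβp_ne
  have hTMq : ∑ v ∈ Mq, β^v.val = 0 := by
    rw [hMq_def, Finset.sum_image hMqinj]
    have h1 : ∀ j ∈ Finset.range p, β^(((j*q : ℕ) : ZMod (p*q))).val = (β^q)^j := by
      intro j _
      rw [hBnat, mul_comm, pow_mul]
    rw [Finset.sum_congr rfl h1]
    exact tw_geom_zero (β^q) p hpo (by rw [← pow_mul, mul_comm]; exact hβN) hβq_ne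
  -- the sum over all units is 1
  have hTU : ∑ v ∈ Ufin, β^v.val = 1 := by
    rw [hsub, Finset.sum_sdiff_eq_sub (Finset.subset_univ _), hTuniv]
    have h3 := Finset.sum_union_inter (s₁ := Mp) (s₂ := Mq) (f := fun v => β^v.val)
    rw [hMpMq, hTMp, hTMq, Finset.sum_singleton] at h3
    have h4 : (0 : ZMod (p*q)).val = 0 := ZMod.val_zero
    rw [h4, pow_zero] at h3
    linear_combination -h3
  have hsum4 : (∑ v ∈ D 0, β^v.val) + (∑ v ∈ D 1, β^v.val) + (∑ v ∈ D 2, β^v.val)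
      + (∑ v ∈ D 3, β^v.val) = 1 := by
    have h1 : ∑ i ∈ Finset.range 4, ∑ v ∈ D i, β^v.val = ∑ v ∈ Ufin, β^v.val := by
      rw [hUfin_def]
      exact (Finset.sum_biUnion (fun i hi j hj hij =>
        hDdisj i j (Finset.mem_range.1 (Finset.mem_coe.1 hi))
          (Finset.mem_range.1 (Finset.mem_coe.1 hj)) hij)).symm
    rw [hTU] at h1
    rw [← h1]
    rw [Finset.sum_range_succ, Finset.sum_range_succ, Finset.sum_range_succ,
      Finset.sum_range_succ, Finset.sum_range_zero]
    ring
  have hρ' : ρ = (∑ v ∈ D 1, β^v.val) + 2 * (∑ v ∈ D 2, β^v.val)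
      + 3 * (∑ v ∈ D 3, β^v.val) := by
    rw [hρ]
    have h1 : Finset.Icc (1:ℕ) 3 = {1, 2, 3} := rfl
    rw [h1, Finset.sum_insert (by decide), Finset.sum_insert (by decide), Finset.sum_singleton]
    push_cast
    ring
  have hfourR : (4 : TruncatedWittVector 2 2 (GaloisField 2 ℓ)) = 0 := tw_four
  have hgp1 : (g : ZMod p)^(p-1) = 1 := by rw [← hgp]; exact pow_orderOf_eq_one _
  have hcast_val : ∀ v : ZMod (p*q), ((v.val : ℕ) : ZMod (p*q)) = v := by
    intro v
    simp [ZMod.natCast_val, ZMod.cast_id]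
  intro u
  have hpow_v : ∀ v : ZMod (p*q), (β^u)^v.val = β^(((u : ZMod (p*q)) * v)).val := by
    intro v
    rw [← pow_mul, ← hBnat (u*v.val)]
    congr 2
    push_cast
    rw [hcast_val v]
  have hfirst : ∀ j : ℕ, (β^u)^(j*p) = (β^(u*p))^j := by
    intro j
    rw [← pow_mul, ← pow_mul]
    congr 1
    ring
  have hfirst_sum : ∑ j ∈ Finset.range q, (β^u)^(j*p) = ∑ j ∈ Finset.range q, (β^(u*p))^j :=
    Finset.sum_congr rfl (fun j _ => hfirst j)
  -- parametrized form of the D-sums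
  have hDsum_par : ∀ i : ℕ, ∑ v ∈ D i, (β^u)^v.val
      = ∑ sj ∈ Finset.range (e/4) ×ˢ Finset.range 4,
          β^(((u * (g^(4*sj.1+i) * h^sj.2) : ℕ) : ZMod (p*q))).val := by
    intro i
    have h1 : ∑ v ∈ D i, (β^u)^v.val = ∑ v ∈ D i, β^(((u : ZMod (p*q)) * v)).val :=
      Finset.sum_congr rfl (fun v _ => hpow_v v)
    rw [h1, hD' i, Finset.sum_image (hinj i)]
    apply Finset.sum_congr rfl
    intro sj _
    congr 2
    push_cast
    ring
  by_cases hqd : q ∣ u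
  · -- q divides u
    have hu0q : ((u:ℕ) : ZMod q) = 0 := (ZMod.natCast_eq_zero_iff u q).2 hqd
    have hζ1 : β^(u*p) = 1 := by
      obtain ⟨t, rfl⟩ := hqd
      rw [show q*t*p = (p*q)*t by ring, pow_mul, hβN, one_pow]
    have hfirst2 : 2 * (∑ j ∈ Finset.range q, (β^u)^(j*p)) = 2 * ((q:ℕ) : TruncatedWittVector 2 2 (GaloisField 2 ℓ)) := by
      rw [hfirst_sum, hζ1]
      simp
    by_cases hpd : p ∣ u
    · -- zero case
      have hNd : (p*q) ∣ u := Nat.Coprime.mul_dvd_of_dvd_of_dvd hpq hpd hqd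
      have hβu1 : β^u = 1 := by
        obtain ⟨t, rfl⟩ := hNd
        rw [pow_mul, hβN, one_pow]
      have hE : E u = 2 := hE2 u (Or.inr ((ZMod.natCast_eq_zero_iff u (p*q)).2 hNd))
      have hecast : ((e:ℕ) : TruncatedWittVector 2 2 (GaloisField 2 ℓ)) = 0 := by
        have : ((e:ℕ) : TruncatedWittVector 2 2 (GaloisField 2 ℓ))
            = 4 * ((((2*a+1)*(2*c) : ℕ)) : TruncatedWittVector 2 2 (GaloisField 2 ℓ)) := by
          rw [he4]; push_cast; ring
        rw [this, hfourR, zero_mul]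
      have hDone : ∀ i : ℕ, ∑ v ∈ D i, (β^u)^v.val = ((e:ℕ) : TruncatedWittVector 2 2 (GaloisField 2 ℓ)) := by
        intro i
        rw [hβu1]
        simp [hDcard i]
      have hsecond : ∑ i ∈ Finset.range 4, (ρ - (i : TruncatedWittVector 2 2 (GaloisField 2 ℓ)))
          * (∑ v ∈ D i, (β^u)^v.val) = 0 := by
        rw [Finset.sum_congr rfl (fun i _ => by rw [hDone i, hecast, mul_zero])]
        simp
      rw [hsecond, hfirst2, hE]
      have hv2 : ((2 : ZMod 4)).val = 2 := rfl
      rw [hv2, hqc]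
      push_cast
      linear_combination (4*((c:ℕ) : TruncatedWittVector 2 2 (GaloisField 2 ℓ)))*hfourR
    · -- Q case
      have hu0p_ne : ((u:ℕ) : ZMod p) ≠ 0 := fun hcon =>
        hpd ((ZMod.natCast_eq_zero_iff u p).1 hcon)
      -- E u = 2 via Qset
      have hrlt : u % (p*q) < p*q := Nat.mod_lt _ (by positivity)
      have hqr : q ∣ u % (p*q) := (Nat.dvd_mod_iff (dvd_mul_left q p)).2 hqd
      have hrne : u % (p*q) ≠ 0 := by
        intro h0
        exact hpd ((dvd_mul_right p q).trans (Nat.dvd_of_mod_eq_zero h0) : p ∣ u)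
      have hE : E u = 2 := by
        apply hE2 u
        left
        rw [hQ, Finset.mem_image]
        refine ⟨(u % (p*q))/q, ?_, ?_⟩
        · rw [Finset.mem_Icc]
          constructor
          · exact (Nat.one_le_div_iff (by omega)).2 (Nat.le_of_dvd (Nat.pos_of_ne_zero hrne) hqr)
          · have h2 : (u % (p*q))/q < p := by
              apply Nat.div_lt_of_lt_mul
              rw [mul_comm q p]
              exact hrlt
            omega
        · rw [Nat.div_mul_cancel hqr, ZMod.natCast_eq_natCast_iff]
          exact Nat.mod_modEq u (p*q)
      -- second sum vanishes
      have hQsum : ∀ i : ℕ, ∑ v ∈ D i, (β^u)^v.val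
          = (2*c) • ∑ m ∈ Finset.range (p-1), β^(((u * g^m : ℕ) : ZMod (p*q))).val := by
        intro i
        rw [hDsum_par i]
        have hterm : ∀ sj ∈ Finset.range (e/4) ×ˢ Finset.range 4,
            β^(((u * (g^(4*sj.1+i) * h^sj.2) : ℕ) : ZMod (p*q))).val
            = β^(((u * g^((4*sj.1+sj.2)+i) : ℕ) : ZMod (p*q))).val := by
          rintro ⟨s, j⟩ _
          congr 2
          apply hcrt
          · push_cast
            rw [hhp]
            ring
          · push_cast
            rw [hu0q, zero_mul, zero_mul]
        rw [Finset.sum_congr rfl hterm]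
        have h2 := sum_prod_four' (fun m => β^(((u * g^(m+i) : ℕ) : ZMod (p*q))).val) (e/4)
        rw [h2]
        have hper : ∀ m : ℕ, β^(((u * g^(m+(p-1)) : ℕ) : ZMod (p*q))).val
            = β^(((u * g^m : ℕ) : ZMod (p*q))).val := by
          intro m
          congr 2
          apply hcrt
          · push_cast
            rw [pow_add, hgp1, mul_one]
          · push_cast
            rw [hu0q, zero_mul, zero_mul]
        have he_eq : 4*(e/4) = (2*c)*(p-1) := by
          rw [he4', hp1]
          ring
        rw [he_eq]
        have h3 := sum_range_mul_periodic' (fun m => β^(((u * g^(m+i) : ℕ) : ZMod (p*q))).val)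
          (p-1) (2*c) (fun m => by
            rw [show m+(p-1)+i = (m+i)+(p-1) from by omega]
            exact hper (m+i))
        rw [h3]
        exact congrArg (fun z => (2*c) • z)
          (sum_range_shift' (fun m => β^(((u * g^m : ℕ) : ZMod (p*q))).val) (p-1) hper i)
      have hsecond : ∑ i ∈ Finset.range 4, (ρ - (i : TruncatedWittVector 2 2 (GaloisField 2 ℓ)))
          * (∑ v ∈ D i, (β^u)^v.val) = 0 := by
        rw [Finset.sum_congr rfl (fun i _ => by rw [hQsum i])]
        rw [Finset.sum_range_succ, Finset.sum_range_succ, Finset.sum_range_succ,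
          Finset.sum_range_succ, Finset.sum_range_zero]
        set X := ∑ m ∈ Finset.range (p-1), β^(((u * g^m : ℕ) : ZMod (p*q))).val with hX
        have hsmul : (2*c) • X = ((2*c : ℕ) : TruncatedWittVector 2 2 (GaloisField 2 ℓ)) * X :=
          nsmul_eq_mul _ _
        rw [hsmul]
        push_cast
        linear_combination (2*((c:ℕ) : TruncatedWittVector 2 2 (GaloisField 2 ℓ))*ρ*X
          - 3*((c:ℕ) : TruncatedWittVector 2 2 (GaloisField 2 ℓ))*X)*hfourR
      rw [hsecond, hfirst2, hE]
      have hv2 : ((2 : ZMod 4)).val = 2 := rfl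
      rw [hv2, hqc]
      push_cast
      linear_combination (4*((c:ℕ) : TruncatedWittVector 2 2 (GaloisField 2 ℓ)))*hfourR
  · -- q does not divide u
    have hζq : (β^(u*p))^q = 1 := by
      rw [← pow_mul, show u*p*q = (p*q)*u by ring, pow_mul, hβN, one_pow]
    have hζne : β^(u*p) ≠ 1 := by
      intro hcon
      have h1 := orderOf_dvd_of_pow_eq_one hcon
      rw [hβo] at h1
      have h2 : q ∣ u * p := (dvd_mul_left q p).trans h1
      rcases (Nat.Prime.dvd_mul hq).1 h2 with hc | hc
      · exact hqd hc
      · exact hne ((Nat.prime_dvd_prime_iff_eq hq hp).1 hc).symm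
    have hfirst0 : 2 * (∑ j ∈ Finset.range q, (β^u)^(j*p)) = 0 := by
      rw [hfirst_sum, tw_geom_zero (β^(u*p)) q hqo hζq hζne, mul_zero]
    by_cases hpd : p ∣ u
    · -- P case
      have hu0p : ((u:ℕ) : ZMod p) = 0 := (ZMod.natCast_eq_zero_iff u p).2 hpd
      have hrlt : u % (p*q) < p*q := Nat.mod_lt _ (by positivity)
      have hpr : p ∣ u % (p*q) := (Nat.dvd_mod_iff (dvd_mul_right p q)).2 hpd
      have hrne : u % (p*q) ≠ 0 := by
        intro h0
        exact hqd ((dvd_mul_left q p).trans (Nat.dvd_of_mod_eq_zero h0) : q ∣ u)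
      have hE : E u = 0 := by
        apply hE0 u
        rw [hP, Finset.mem_image]
        refine ⟨(u % (p*q))/p, ?_, ?_⟩
        · rw [Finset.mem_Icc]
          constructor
          · exact (Nat.one_le_div_iff (by omega)).2 (Nat.le_of_dvd (Nat.pos_of_ne_zero hrne) hpr)
          · have h2 : (u % (p*q))/p < q := by
              apply Nat.div_lt_of_lt_mul
              rw [mul_comm p q]
              rw [mul_comm p q] at hrlt
              exact hrlt
            omega
        · rw [Nat.div_mul_cancel hpr, ZMod.natCast_eq_natCast_iff]
          exact Nat.mod_modEq u (p*q)
      have hPsum : ∀ i : ℕ, ∑ v ∈ D i, (β^u)^v.val = 0 := by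
        intro i
        rw [hDsum_par i]
        have hterm : ∀ sj ∈ Finset.range (e/4) ×ˢ Finset.range 4,
            β^(((u * (g^(4*sj.1+i) * h^sj.2) : ℕ) : ZMod (p*q))).val
            = β^(((u * g^(4*sj.1+i) : ℕ) : ZMod (p*q))).val := by
          rintro ⟨s, j⟩ _
          congr 2
          apply hcrt
          · push_cast
            rw [hu0p, zero_mul, zero_mul]
          · push_cast
            rw [hhq, one_pow, mul_one]
        rw [Finset.sum_congr rfl hterm, Finset.sum_product]
        have hrow : ∀ s ∈ Finset.range (e/4),
            ∑ j ∈ Finset.range 4, β^(((u * g^(4*s+i) : ℕ) : ZMod (p*q))).val = 0 := by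
          intro s _
          rw [Finset.sum_const, Finset.card_range]
          have : (4:ℕ) • β^(((u * g^(4*s+i) : ℕ) : ZMod (p*q))).val
              = ((4:ℕ) : TruncatedWittVector 2 2 (GaloisField 2 ℓ)) * β^(((u * g^(4*s+i) : ℕ) : ZMod (p*q))).val :=
            nsmul_eq_mul _ _
          rw [this, hfour, zero_mul]
        rw [Finset.sum_congr rfl hrow]
        simp
      have hsecond : ∑ i ∈ Finset.range 4, (ρ - (i : TruncatedWittVector 2 2 (GaloisField 2 ℓ)))
          * (∑ v ∈ D i, (β^u)^v.val) = 0 := by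
        rw [Finset.sum_congr rfl (fun i _ => by rw [hPsum i, mul_zero])]
        simp
      rw [hsecond, hfirst0, hE]
      norm_num
    · -- unit case
      have hu0p_ne : ((u:ℕ) : ZMod p) ≠ 0 := fun hcon =>
        hpd ((ZMod.natCast_eq_zero_iff u p).1 hcon)
      have hu0q_ne : ((u:ℕ) : ZMod q) ≠ 0 := fun hcon =>
        hqd ((ZMod.natCast_eq_zero_iff u q).1 hcon)
      have hUunit : IsUnit ((u:ℕ) : ZMod (p*q)) := by
        apply (ZMod.isUnit_iff_coprime u (p*q)).2
        apply Nat.Coprime.mul_right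
        · exact ((Nat.Prime.coprime_iff_not_dvd hp).2 hpd).symm
        · exact ((Nat.Prime.coprime_iff_not_dvd hq).2 hqd).symm
      have hux : ((u:ℕ) : ZMod (p*q)) ∈ Ufin := by
        rw [hsub, Finset.mem_sdiff]
        refine ⟨Finset.mem_univ _, ?_⟩
        intro hmem'
        rcases Finset.mem_union.1 hmem' with hc | hc
        · exact hMp_nonunit _ hc hUunit
        · exact hMq_nonunit _ hc hUunit
      rw [hUfin_def, Finset.mem_biUnion] at hux
      obtain ⟨k, hk, hkD⟩ := hux
      rw [Finset.mem_range] at hk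
      have hE : E u = (k : ZMod 4) := hED u k hk hkD
      -- image lemma
      have himg : ∀ i : ℕ, i < 4 →
          Finset.image (fun v => ((u:ℕ) : ZMod (p*q)) * v) (D i) = D ((i+k)%4) := by
        intro i hi
        apply Finset.eq_of_subset_of_card_le
        · intro x hx
          rw [Finset.mem_image] at hx
          obtain ⟨v, hv, hxv⟩ := hx
          rw [hD' i, Finset.mem_image] at hv
          obtain ⟨⟨s, j⟩, _, hsj⟩ := hv
          rw [hD' k, Finset.mem_image] at hkD
          obtain ⟨⟨s0, j0⟩, _, hs0⟩ := hkD
          have hx2 : x = (((g^(4*s0+k) * h^j0) * (g^(4*s+i) * h^j) : ℕ) : ZMod (p*q)) := by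
            rw [← hxv, ← hsj, ← hs0]
            push_cast
            ring
          have hnat : (g^(4*s0+k) * h^j0) * (g^(4*s+i) * h^j)
              = g^(4*(s0+s+((i+k)/4))+((i+k)%4)) * h^(j0+j) := by
            rw [show 4*(s0+s+((i+k)/4))+((i+k)%4) = (4*s0+k)+(4*s+i) from by omega,
              pow_add, pow_add]
            ring
          rw [hx2, hnat]
          exact hmem _ _ _ (by omega)
        · rw [hDcard, Finset.card_image_of_injOn
            (fun x _ y _ hxy => hUunit.mul_left_cancel hxy), hDcard]
      have hDtrans : ∀ i : ℕ, i < 4 → ∑ v ∈ D i, (β^u)^v.val = ∑ v ∈ D ((i+k)%4), β^v.val := by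
        intro i hi
        have h1 : ∑ v ∈ D i, (β^u)^v.val = ∑ v ∈ D i, β^(((u : ZMod (p*q)) * v)).val :=
          Finset.sum_congr rfl (fun v _ => hpow_v v)
        rw [h1, ← himg i hi, Finset.sum_image (fun x _ y _ hxy => hUunit.mul_left_cancel hxy)]
      have hsecond : ∑ i ∈ Finset.range 4, (ρ - (i : TruncatedWittVector 2 2 (GaloisField 2 ℓ)))
          * (∑ v ∈ D i, (β^u)^v.val)
          = ∑ i ∈ Finset.range 4, (ρ - (i : TruncatedWittVector 2 2 (GaloisField 2 ℓ)))
          * (∑ v ∈ D ((i+k)%4), β^v.val) :=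
        Finset.sum_congr rfl (fun i hi => by rw [hDtrans i (Finset.mem_range.1 hi)])
      rw [hsecond, hfirst0, hE]
      have hval_k : ((k : ZMod 4)).val = k := by
        rw [ZMod.val_natCast]
        omega
      rw [hval_k]
      rw [Finset.sum_range_succ, Finset.sum_range_succ, Finset.sum_range_succ,
        Finset.sum_range_succ, Finset.sum_range_zero]
      interval_cases k
      · norm_num
        linear_combination ρ*hsum4 + hρ'
      · norm_num
        linear_combination (ρ+1)*hsum4 + hρ' - (∑ v ∈ D 0, β^v.val)*hfourR
      · norm_num
        linear_combination (ρ+2)*hsum4 + hρ'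
          - ((∑ v ∈ D 0, β^v.val) + (∑ v ∈ D 1, β^v.val))*hfourR
      · norm_num
        linear_combination (ρ+3)*hsum4 + hρ'
          - ((∑ v ∈ D 0, β^v.val) + (∑ v ∈ D 1, β^v.val) + (∑ v ∈ D 2, β^v.val))*hfourR
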